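/- Let d be a positive integer that is not a perfect square and let z be a positive integer. Then the sequence of Rédei rational functions Q_n(d,z) = N_n(d,z)/D_n(d,z) converges to √d as n → ∞ in the real numbers. -/

import Mathlib

/-- Rédei polynomial `N_n(d,z)` as a real number. -/
noncomputable def redeiN (d z : ℝ) (n : ℕ) : ℝ :=
  ∑ i ∈ Finset.range (n / 2 + 1), (n.choose (2 * i) : ℝ) * d ^ i * z ^ (n - 2 * i)

/-- Rédei polynomial `D_n(d,z)` as a real number. -/
noncomputable def redeiD (d z : ℝ) (n : ℕ) : ℝ :=
  ∑ i ∈ Finset.range (n / 2 + 1), (n.choose (2 * i + 1) : ℝ) * d ^ i * z ^ (n - 2 * i - 1)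

lemma sum_range_two_mul_aux (f : ℕ → ℝ) (m : ℕ) :
    ∑ k ∈ Finset.range (2 * m), f k =
      ∑ i ∈ Finset.range m, f (2 * i) + ∑ i ∈ Finset.range m, f (2 * i + 1) := by
  induction m with
  | zero => simp
  | succ m ih =>
    have : 2 * (m + 1) = (2 * m + 1) + 1 := by ring
    rw [this, Finset.sum_range_succ, Finset.sum_range_succ,
      Finset.sum_range_succ (fun i => f (2 * i)), Finset.sum_range_succ (fun i => f (2 * i + 1)),
      ih]
    ring

lemma redei_expand (d z s : ℝ) (hs : s ^ 2 = d) (n : ℕ) :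
    (z + s) ^ n = redeiN d z n + s * redeiD d z n := by
  have h1 : (z + s) ^ n = ∑ k ∈ Finset.range (n + 1),
      s ^ k * z ^ (n - k) * (n.choose k : ℝ) := by
    rw [add_comm z s, add_pow]
  have h2 : ∑ k ∈ Finset.range (n + 1), s ^ k * z ^ (n - k) * (n.choose k : ℝ) =
      ∑ k ∈ Finset.range (2 * (n / 2 + 1)), s ^ k * z ^ (n - k) * (n.choose k : ℝ) := by
    apply Finset.sum_subset
    · apply Finset.range_subset_range.2; omega
    · intro k _ hk
      have : n < k := by simp at hk; omega
      simp [Nat.choose_eq_zero_of_lt this]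
  rw [h1, h2, sum_range_two_mul_aux]
  congr 1
  · apply Finset.sum_congr rfl
    intro i _
    rw [pow_mul, hs]; ring
  · rw [redeiD, Finset.mul_sum]
    apply Finset.sum_congr rfl
    intro i _
    have : n - (2 * i + 1) = n - 2 * i - 1 := by omega
    rw [pow_succ, pow_mul, hs, this]; ring

open Filter in
theorem redei_tendsto_sqrt (d : ℤ) (z : ℤ) (hd : 0 < d) (hsq : ¬ IsSquare d) (hz : 0 < z) :
    Tendsto (fun n : ℕ => redeiN (d : ℝ) (z : ℝ) n / redeiD (d : ℝ) (z : ℝ) n)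
      atTop (nhds (Real.sqrt d)) := by
  set s : ℝ := Real.sqrt d with hsdef
  have hd' : (0 : ℝ) < (d : ℝ) := by exact_mod_cast hd
  have hz' : (0 : ℝ) < (z : ℝ) := by exact_mod_cast hz
  have hs : 0 < s := Real.sqrt_pos.2 hd'
  have hs2 : s ^ 2 = (d : ℝ) := Real.sq_sqrt hd'.le
  set a : ℝ := (z : ℝ) + s with ha_def
  set b : ℝ := (z : ℝ) - s with hb_def
  have ha : 0 < a := by positivity
  have hba : |b| < a := by
    rw [abs_lt]; constructor <;> [simp [ha_def, hb_def]; simp [ha_def, hb_def]] <;> linarith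
  have hN : ∀ n, redeiN (d : ℝ) (z : ℝ) n = (a ^ n + b ^ n) / 2 := by
    intro n
    have e1 := redei_expand (d : ℝ) (z : ℝ) s hs2 n
    have e2 := redei_expand (d : ℝ) (z : ℝ) (-s) (by rw [neg_pow]; simpa using hs2) n
    have : (z : ℝ) + -s = b := by rw [hb_def]; ring
    rw [this] at e2
    rw [← ha_def] at e1
    linarith
  have hD : ∀ n, redeiD (d : ℝ) (z : ℝ) n = (a ^ n - b ^ n) / (2 * s) := by
    intro n
    have e1 := redei_expand (d : ℝ) (z : ℝ) s hs2 n
    have e2 := redei_expand (d : ℝ) (z : ℝ) (-s) (by rw [neg_pow]; simpa using hs2) n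
    have : (z : ℝ) + -s = b := by rw [hb_def]; ring
    rw [this] at e2
    rw [← ha_def] at e1
    have : s * redeiD (d : ℝ) (z : ℝ) n = (a ^ n - b ^ n) / 2 := by linarith
    field_simp at this ⊢
    linarith
  set r : ℝ := b / a with hr_def
  have hr : |r| < 1 := by
    rw [hr_def, abs_div, abs_of_pos ha, div_lt_one ha]; exact hba
  have hrlim : Tendsto (fun n : ℕ => r ^ n) atTop (nhds 0) :=
    tendsto_pow_atTop_nhds_zero_of_abs_lt_one hr
  have hglim : Tendsto (fun n : ℕ => s * (1 + r ^ n) / (1 - r ^ n)) atTop (nhds s) := by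
    have : Tendsto (fun n : ℕ => s * (1 + r ^ n) / (1 - r ^ n)) atTop
        (nhds (s * (1 + 0) / (1 - 0))) := by
      apply Tendsto.div
      · exact (tendsto_const_nhds.mul (tendsto_const_nhds.add hrlim))
      · exact tendsto_const_nhds.sub hrlim
      · norm_num
    simpa using this
  apply Tendsto.congr' _ hglim
  filter_upwards [eventually_ge_atTop 1] with n hn
  have hbn : b ^ n < a ^ n := by
    calc b ^ n ≤ |b ^ n| := le_abs_self _
    _ = |b| ^ n := by rw [abs_pow]
    _ < a ^ n := pow_lt_pow_left₀ hba (abs_nonneg _) (by omega)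
  have hane : a ^ n ≠ 0 := (pow_pos ha n).ne'
  have hsub : a ^ n - b ^ n ≠ 0 := by linarith
  rw [hN, hD, hr_def, div_pow]
  field_simp
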